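/- Assume E = K or F, and that IC^mix_s ≅ E^mix_s for all s ∈ S. Then the category P^mix_S(X,E) is Koszul, i.e. Ext^k(IC^mix_s, IC^mix_t⟨n⟩) = 0 unless n = −k; in particular P^mix_S(X,E) is positively graded. -/
import Mathlib


/-!
Setting of Achar–Riche, "Modular perverse sheaves on flag varieties II", §§3–4:
`X` is a complex variety with a finite stratification `S` by affine spaces satisfying
assumptions (A1) and (A2) of [AR1]; `D` stands for the mixed derived category
`D^mix_S(X,E) = K^b Parity_S(X,E)`, with cohomological shift `⟦n⟧`, internal shift
`Br n = {n}`, Tate twist `Tw n = ⟨n⟩ = {−n}[n]`, standard objects `Dm s = Δ^mix_s`,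
costandard objects `Nm s = ∇^mix_s`, and indecomposable parity objects `Par s = E^mix_s`.
-/

open CategoryTheory CategoryTheory.Limits CategoryTheory.Pretriangulated

attribute [local instance] CategoryTheory.Limits.HasFiniteBiproducts.of_hasFiniteProducts

universe w v u

/-- `M` lies in the triangulated subcategory generated by the objects satisfying `G`. -/
def TriangGenBy {D : Type u} [Category.{v} D] [HasShift D ℤ] [Preadditive D] [HasZeroObject D]
    [∀ n : ℤ, (shiftFunctor D n).Additive] [Pretriangulated D]
    (G : D → Prop) (M : D) : Prop :=
  ∀ P : D → Prop, (∀ X, IsZero X → P X) → (∀ X Y, Nonempty (X ≅ Y) → P X → P Y) →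
    (∀ (X : D) (n : ℤ), P X → P (X⟦n⟧)) →
    (∀ T ∈ distTriang D, P T.obj₁ → P T.obj₃ → P T.obj₂) →
    (∀ X, G X → P X) → P M

/-- Corollary 3.18 of the paper.  Assume `E = K` or `F` and that
`IC^mix_s ≅ E^mix_s` for all `s ∈ S`.  Then the category `P^mix_S(X,E)` is Koszul:
`Ext^k(IC^mix_s, IC^mix_t⟨n⟩) = 0` unless `n = −k`; in particular it is positively graded.
(Since `D^mix_S(X,E) ≅ D^b P^mix_S(X,E)`, the `Ext`-groups of the heart are computed as
`Hom`-groups in the mixed derived category, and positive grading is expressed by the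
`Ext¹`-criterion of Proposition 2.4(4).) -/
theorem koszulity_from_parity_simples
    {S : Type u} [Fintype S]
    (D : Type u) [Category.{v} D] [Preadditive D] [HasZeroObject D] [HasShift D ℤ]
    [∀ n : ℤ, (shiftFunctor D n).Additive] [Pretriangulated D]
    -- internal shift `{m}`, Tate twist `⟨n⟩`, simple and parity objects:
    (Br : ℤ → D ⥤ D) (Tw : ℤ → D ⥤ D) (IC Par : S → D)
    -- `⟨n⟩ = {−n}[n]`:
    (htw : ∀ n : ℤ, Nonempty (Tw n ≅ Br (-n) ⋙ shiftFunctor D n))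
    -- `Hom`-vanishing between parity objects in `K^b Parity_S(X,E)` in nonzero degrees:
    (hpar : ∀ (s t : S) (m j : ℤ), j ≠ 0 →
      ∀ f : Par s ⟶ ((Br m).obj (Par t))⟦j⟧, f = 0)
    -- the hypothesis `IC^mix_s ≅ E^mix_s`:
    (hIC : ∀ s : S, Nonempty (IC s ≅ Par s)) :
    (∀ (s t : S) (kk : ℕ) (n : ℤ), n ≠ -(kk : ℤ) →
      ∀ f : IC s ⟶ ((Tw n).obj (IC t))⟦(kk : ℤ)⟧, f = 0) ∧
    (∀ (s t : S) (n : ℤ), 0 < n →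
      ∀ f : IC s ⟶ ((Tw n).obj (IC t))⟦(1 : ℤ)⟧, f = 0) := by
  have main : ∀ (s t : S) (kk : ℤ) (n : ℤ), n ≠ -kk →
      ∀ f : IC s ⟶ ((Tw n).obj (IC t))⟦kk⟧, f = 0 := by
    intro s t kk n hn f
    have e1 : (Tw n).obj (IC t) ≅ ((Br (-n)).obj (Par t))⟦n⟧ :=
      (htw n).some.app (IC t) ≪≫ (shiftFunctor D n).mapIso ((Br (-n)).mapIso (hIC t).some)
    have e2 : ((Tw n).obj (IC t))⟦kk⟧ ≅ ((Br (-n)).obj (Par t))⟦n + kk⟧ :=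
      (shiftFunctor D kk).mapIso e1 ≪≫ ((shiftFunctorAdd D n kk).symm.app _)
    have hj : n + kk ≠ 0 := fun h => hn (by omega)
    have h0 : (hIC s).some.inv ≫ f ≫ e2.hom = 0 := hpar s t (-n) (n + kk) hj _
    have : f ≫ e2.hom = 0 := by
      have := congrArg (fun g => (hIC s).some.hom ≫ g) h0
      simpa using this
    calc f = (f ≫ e2.hom) ≫ e2.inv := by simp
    _ = 0 := by rw [this]; simp
  refine ⟨fun s t kk n hn f => main s t kk n hn f, fun s t n hn f => ?_⟩
  exact main s t 1 n (by omega) f
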